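/- Let n ≥ m ≥ 1 be natural numbers and let w be a real number with 1 < w < 2^m, with 2^{n−m}·w ∈ ℕ (an n-bit fixed-point number with m integer bits), and such that w is not an integer power of 2. Let p be the unique positive integer with 2^{p−1} < w < 2^p (so p ≤ m), and set w_p = 2^{1−p}·w ∈ (1,2). Let ℓ be a natural number with ℓ ≥ ⌈log₂(8n)⌉ and set b = max{5ℓ, 25}. Suppose t̂_p is a real number with t̂_p ≥ 1 and |t̂_p − w_p^{1/2^ℓ}| ≤ 2·(3/4)^{b−2}·(2 + b + log₂ b); let ŷ_p = trunc_b((t̂_p − 1) − (1/2)(t̂_p − 1)²) and z_p = 2^ℓ·ŷ_p; and let r be a real number with |r − ln 2| ≤ 2^{−b}. Then |z_p + (p−1)·r − ln w| ≤ (3/4)^{5ℓ/2}·(m + 32/9 + 2·(32/9 + n/ln 2)³). -/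

import Mathlib

/-- Truncation of a real number to `b` bits after the binary point:
`trunc b y = ⌊2^b * y⌋ / 2^b`. -/
noncomputable def trunc (b : ℕ) (y : ℝ) : ℝ := (⌊(2:ℝ)^b * y⌋ : ℝ) / 2^b

lemma bern2 (x : ℝ) (hx : 0 ≤ x) (n : ℕ) :
    1 + n*x + n*(n-1)/2*x^2 ≤ (1+x)^n := by
  induction n with
  | zero => simp
  | succ k ih =>
    have hk : (0:ℝ) ≤ k := Nat.cast_nonneg k
    have h3 : (0:ℝ) ≤ (k:ℝ)*((k:ℝ)-1) := by
      rcases Nat.eq_zero_or_pos k with h|h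
      · simp [h]
      · have : (1:ℝ) ≤ k := by exact_mod_cast h
        nlinarith
    have h2 : (1 + k*x + k*(k-1)/2*x^2) * (1+x) ≤ (1+x)^k * (1+x) :=
      mul_le_mul_of_nonneg_right ih (by linarith)
    have h4 : (0:ℝ) ≤ (k:ℝ)*((k:ℝ)-1) * x^3 := mul_nonneg h3 (by positivity)
    have h5 : (1+x)^(k+1) = (1+x)^k * (1+x) := by ring
    push_cast
    nlinarith [h2, h4]

lemma cast_mul_sub_one_nonneg (L : ℕ) : (0:ℝ) ≤ (L:ℝ)*((L:ℝ)-1) := by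
  rcases Nat.eq_zero_or_pos L with h|h
  · simp [h]
  · have : (1:ℝ) ≤ L := by exact_mod_cast h
    nlinarith

lemma L4' (d θ : ℝ) (hdlb : 2637/100000 ≤ d) (hθ : 0 < θ)
    (hmul : θ*(1+d) = 1) (L : ℕ) : (19/2 + 15/2*(L:ℝ)) * θ^L ≤ 585/4 := by
  have hd0 : (0:ℝ) ≤ d := by linarith
  have h1d : (0:ℝ) < 1+d := by linarith
  have hpow : θ^L * (1+d)^L = 1 := by rw [← mul_pow, hmul, one_pow]
  have hLk := cast_mul_sub_one_nonneg L
  have hbern := bern2 d hd0 L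
  have hL0 : (0:ℝ) ≤ L := Nat.cast_nonneg L
  have key : 19/2 + 15/2*(L:ℝ) ≤ 585/4 * (1+d)^L := by
    have t1 : (L:ℝ)*(2637/100000) ≤ (L:ℝ)*d := by nlinarith
    have t2 : (L:ℝ)*((L:ℝ)-1)/2*(2637/100000)^2 ≤ (L:ℝ)*((L:ℝ)-1)/2*d^2 := by
      nlinarith [mul_nonneg hLk (mul_nonneg (by linarith : (0:ℝ) ≤ d - 2637/100000)
        (by linarith : (0:ℝ) ≤ d + 2637/100000))]
    nlinarith [sq_nonneg ((L:ℝ) - 363/10)]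
  calc (19/2 + 15/2*(L:ℝ)) * θ^L
      ≤ (585/4 * (1+d)^L) * θ^L :=
        mul_le_mul_of_nonneg_right key (le_of_lt (pow_pos hθ L))
    _ = 585/4 := by rw [mul_assoc, mul_comm ((1+d)^L), hpow]; ring

lemma L4 (L : ℕ) : (19/2 + 15/2*(L:ℝ)) * (9*Real.sqrt 3/16)^L ≤ 585/4 := by
  have hs2 : Real.sqrt 3^2 = 3 := Real.sq_sqrt (by norm_num)
  have hslb : (1.732:ℝ) ≤ Real.sqrt 3 := by
    rw [Real.le_sqrt (by norm_num) (by norm_num)]; norm_num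
  refine L4' (16*Real.sqrt 3/27 - 1) _ (by nlinarith) (by nlinarith) (by nlinarith [hs2]) L

lemma sq_le_two_pow {b : ℕ} (hb : 25 ≤ b) : b^2 ≤ 2^b := by
  induction b, hb using Nat.le_induction with
  | base => norm_num
  | succ k hk ih =>
    have h : (k+1)^2 ≤ 2 * k^2 := by nlinarith
    calc (k+1)^2 ≤ 2*k^2 := h
    _ ≤ 2*2^k := by omega
    _ = 2^(k+1) := by ring

lemma pow34_lin {b : ℕ} (hb : 25 ≤ b) : ((3:ℝ)/4)^b * (2+2*b) ≤ 1/10 := by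
  induction b, hb using Nat.le_induction with
  | base => norm_num
  | succ k hk ih =>
    have h0 : (0:ℝ) < ((3:ℝ)/4)^k := by positivity
    have hk' : (25:ℝ) ≤ k := by exact_mod_cast hk
    have h1 : ((3:ℝ)/4)^(k+1) * (2+2*((k:ℝ)+1)) ≤ ((3:ℝ)/4)^k * (2+2*k) := by
      have h2 : ((3:ℝ)/4) * (2+2*((k:ℝ)+1)) ≤ 2+2*k := by nlinarith
      calc ((3:ℝ)/4)^(k+1) * (2+2*((k:ℝ)+1)) = ((3:ℝ)/4)^k * (((3:ℝ)/4) * (2+2*((k:ℝ)+1))) := by ring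
      _ ≤ ((3:ℝ)/4)^k * (2+2*(k:ℝ)) := mul_le_mul_of_nonneg_left h2 (le_of_lt h0)
    push_cast
    linarith

lemma abs_trunc_sub_le (b : ℕ) (y : ℝ) : |trunc b y - y| ≤ ((2:ℝ)^b)⁻¹ := by
  unfold trunc
  have h2 : (0:ℝ) < 2^b := by positivity
  have h1 : ((⌊(2:ℝ)^b*y⌋:ℝ)) ≤ 2^b*y := Int.floor_le _
  have h2' : 2^b*y - 1 < ((⌊(2:ℝ)^b*y⌋:ℝ)) := Int.sub_one_lt_floor _
  have hnum : |((⌊(2:ℝ)^b*y⌋:ℝ)) - 2^b*y| ≤ 1 := by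
    rw [abs_le]; constructor <;> linarith
  have heq : ((⌊(2:ℝ)^b*y⌋:ℝ))/2^b - y = (((⌊(2:ℝ)^b*y⌋:ℝ)) - 2^b*y)/2^b := by
    field_simp
  rw [heq, abs_div, abs_of_pos h2, div_le_iff₀ h2]
  calc |((⌊(2:ℝ)^b*y⌋:ℝ)) - 2^b*y| ≤ 1 := hnum
  _ = (2^b)⁻¹ * 2^b := by field_simp

set_option maxHeartbeats 1000000 in
/-- Error analysis of Algorithm LN: approximating `ln w` by shifting `w` into `[1,2)`,
taking the `2^ℓ`-th root, approximating `ln(1+δ)` by `δ − δ²/2`, rescaling by `2^ℓ`,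
and adding `(p−1)·r` where `r` approximates `ln 2`. -/
theorem stmt3 (n m : ℕ) (hm : 1 ≤ m) (hmn : m ≤ n)
    (w : ℝ) (hw1 : 1 < w) (hw2 : w < 2^m)
    (hfix : ∃ K : ℕ, (2:ℝ)^(n-m) * w = K)
    (hnotpow : ∀ j : ℤ, w ≠ (2:ℝ)^j)
    (p : ℕ) (hp : 1 ≤ p) (hp1 : (2:ℝ)^(p-1) < w) (hp2 : w < 2^p)
    (ℓ : ℕ) (hℓ : ⌈Real.logb 2 (8*(n:ℝ))⌉₊ ≤ ℓ)
    (b : ℕ) (hb : b = max (5*ℓ) 25)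
    (thatp : ℝ) (hthat1 : 1 ≤ thatp)
    (hthat2 : |thatp - ((2:ℝ)^((1 - (p:ℤ))) * w) ^ ((1:ℝ)/2^ℓ)| ≤
      2 * (3/4 : ℝ)^(b-2) * (2 + (b:ℝ) + Real.logb 2 b))
    (yhatp : ℝ) (hyhat : yhatp = trunc b ((thatp - 1) - (1/2) * (thatp - 1)^2))
    (r : ℝ) (hr : |r - Real.log 2| ≤ (2:ℝ)^(-(b:ℤ))) :
    |(2:ℝ)^ℓ * yhatp + ((p:ℝ) - 1) * r - Real.log w| ≤
      (3/4 : ℝ) ^ ((5*(ℓ:ℝ))/2) * ((m:ℝ) + 32/9 + 2 * (32/9 + (n:ℝ) / Real.log 2)^3) := by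
  -- basic facts
  have hn2 : 2 ≤ n := by
    by_contra h
    have hn1 : n = 1 := by omega
    have hm1 : m = 1 := by omega
    obtain ⟨K, hK⟩ := hfix
    rw [hn1, hm1] at hK
    norm_num at hK
    have h1 : (1:ℝ) < K := by rw [← hK]; exact hw1
    have h2 : (K:ℝ) < 2 := by
      rw [← hK]
      calc w < 2^m := hw2
      _ = 2 := by rw [hm1]; norm_num
    have h3 : (2:ℕ) ≤ K := by exact_mod_cast h1
    have h4 : (2:ℝ) ≤ K := by exact_mod_cast h3
    linarith
  have hl4 : 4 ≤ ℓ := by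
    have h16 : (16:ℝ) ≤ 8*(n:ℝ) := by
      have : (2:ℝ) ≤ n := by exact_mod_cast hn2
      linarith
    have hlog : (4:ℝ) ≤ Real.logb 2 (8*(n:ℝ)) := by
      have h4 : Real.logb 2 (16:ℝ) = 4 := by
        rw [show (16:ℝ) = 2^(4:ℕ) by norm_num, Real.logb_pow, Real.logb_self_eq_one] <;> norm_num
      rw [← h4]
      exact (Real.logb_le_logb one_lt_two (by norm_num) (by linarith)).mpr h16
    calc 4 = ⌈(4:ℝ)⌉₊ := by norm_num
    _ ≤ ⌈Real.logb 2 (8*(n:ℝ))⌉₊ := Nat.ceil_le_ceil hlog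
    _ ≤ ℓ := hℓ
  have hb5 : 5*ℓ ≤ b := by omega
  have hb25 : 25 ≤ b := by omega
  have hble : b ≤ 5*ℓ + 5 := by omega
  have hpm : p ≤ m := by
    by_contra h
    push_neg at h
    have : m ≤ p - 1 := by omega
    have h1 : (2:ℝ)^m ≤ 2^(p-1) := pow_le_pow_right₀ (by norm_num) this
    linarith
  -- wp
  set wp : ℝ := (2:ℝ)^((1 - (p:ℤ))) * w with hwp
  have h2z : (2:ℝ) ≠ 0 := two_ne_zero
  have hpow1 : (2:ℝ)^((p-1:ℕ)) = (2:ℝ)^((p:ℤ)-1) := by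
    rw [show ((p:ℤ) - 1) = ((p-1:ℕ):ℤ) by omega, zpow_natCast]
  have hzpos : (0:ℝ) < (2:ℝ)^((1:ℤ)-(p:ℤ)) := by positivity
  have hwp1 : 1 < wp := by
    have h : (2:ℝ)^((1:ℤ)-(p:ℤ)) * (2:ℝ)^((p:ℤ)-1) < 2^(1-(p:ℤ)) * w := by
      apply mul_lt_mul_of_pos_left _ hzpos
      rw [← hpow1]; exact hp1
    rwa [← zpow_add₀ h2z, show (1-(p:ℤ))+((p:ℤ)-1) = 0 by ring, zpow_zero] at h
  have hwp2 : wp < 2 := by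
    have h : (2:ℝ)^((1:ℤ)-(p:ℤ)) * w < (2:ℝ)^((1:ℤ)-(p:ℤ)) * (2:ℝ)^((p:ℤ)) := by
      apply mul_lt_mul_of_pos_left _ hzpos
      rw [zpow_natCast]; exact hp2
    rwa [← zpow_add₀ h2z, show (1-(p:ℤ))+(p:ℤ) = 1 by ring, zpow_one] at h
  have hwp0 : 0 < wp := by linarith
  -- logs
  have hlog2pos : (0:ℝ) < Real.log 2 := Real.log_pos (by norm_num)
  have hlogwp_pos : 0 < Real.log wp := Real.log_pos hwp1
  have hlogwp_lt : Real.log wp < Real.log 2 := Real.log_lt_log hwp0 hwp2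
  have hlog2_lt : Real.log 2 < 0.6931471808 := Real.log_two_lt_d9
  have hlog2_gt : (0.6931471803:ℝ) < Real.log 2 := Real.log_two_gt_d9
  -- t and x
  set t : ℝ := wp ^ ((1:ℝ)/2^ℓ) with ht
  set x : ℝ := Real.log wp * ((1:ℝ)/2^ℓ) with hx
  have h2lpos : (0:ℝ) < 2^ℓ := by positivity
  have h2l16 : (16:ℝ) ≤ 2^ℓ := by
    calc (16:ℝ) = 2^(4:ℕ) := by norm_num
    _ ≤ 2^ℓ := pow_le_pow_right₀ (by norm_num) hl4
  have hinv16 : ((1:ℝ)/2^ℓ) ≤ 1/16 := by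
    apply div_le_div_of_nonneg_left (by norm_num) (by norm_num) h2l16
  have hinvpos : (0:ℝ) < (1:ℝ)/2^ℓ := by positivity
  have htexp : t = Real.exp x := by
    rw [ht, hx, Real.rpow_def_of_pos hwp0]
  have hx0 : 0 < x := mul_pos hlogwp_pos hinvpos
  have hxub : x ≤ (7/10) * ((1:ℝ)/2^ℓ) := by
    apply mul_le_mul_of_nonneg_right _ (le_of_lt hinvpos)
    linarith
  have hxsmall : x ≤ 7/160 := by
    calc x ≤ (7/10) * ((1:ℝ)/2^ℓ) := hxub
    _ ≤ (7/10) * (1/16) := by linarith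
    _ = 7/160 := by norm_num
  have hx1 : |x| ≤ 1 := by rw [abs_of_pos hx0]; linarith
  -- delta bounds
  have hexp := Real.exp_bound hx1 one_pos
  simp only [Finset.sum_range_one, pow_zero, Nat.factorial_zero, Nat.cast_one] at hexp
  norm_num [abs_of_pos hx0] at hexp
  -- hexp : |Real.exp x - 1| ≤ x * 2  (hopefully)
  have hδ0 : 0 < t - 1 := by
    rw [htexp]
    have := Real.add_one_le_exp x
    linarith
  have hδub : t - 1 ≤ (7/5) * ((1:ℝ)/2^ℓ) := by
    have h1 : Real.exp x - 1 ≤ 2*x := by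
      have := abs_le.mp hexp
      linarith [this.2]
    rw [htexp]
    linarith
  have hδ10 : t - 1 ≤ 7/80 := by
    calc t - 1 ≤ (7/5) * ((1:ℝ)/2^ℓ) := hδub
    _ ≤ (7/5) * (1/16) := by linarith
    _ = 7/80 := by norm_num
  have ht1 : 1 < t := by linarith
  -- log t
  have hlogt : Real.log t = Real.log wp * ((1:ℝ)/2^ℓ) := by
    rw [ht, Real.log_rpow hwp0]; ring
  have hlogt2 : (2:ℝ)^ℓ * Real.log t = Real.log wp := by
    rw [hlogt]; field_simp
  have hlogwp_eq : Real.log wp = (1-(p:ℝ))*Real.log 2 + Real.log w := by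
    rw [hwp, Real.log_mul (by positivity) (by linarith), Real.log_zpow]
    push_cast; ring
  have hlogw : Real.log w = (2:ℝ)^ℓ * Real.log t + ((p:ℝ)-1) * Real.log 2 := by
    rw [hlogt2, hlogwp_eq]; ring
  -- e3 : Taylor bound for log
  set δ : ℝ := t - 1 with hδ
  clear_value δ
  have habs : |(-δ)| = δ := by rw [abs_neg, abs_of_pos hδ0]
  have htaylor := Real.abs_log_sub_add_sum_range_le (x := -δ) (by rw [habs]; linarith) 2
  rw [habs] at htaylor
  have hsum : (∑ i ∈ Finset.range 2, (-δ)^(i+1)/((i:ℝ)+1)) = -δ + δ^2/2 := by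
    rw [Finset.sum_range_succ, Finset.sum_range_one]
    norm_num
  rw [hsum, show 1 - (-δ) = t by rw [hδ]; ring] at htaylor
  -- htaylor : |(-δ + δ^2/2) + log t| ≤ δ^3/(1-δ)
  have he3 : |(δ - (1/2)*δ^2) - Real.log t| ≤ (10/9) * δ^3 := by
    have h1 : |(δ - (1/2)*δ^2) - Real.log t| = |(-δ + δ^2/2) + Real.log t| := by
      rw [← abs_neg]; congr 1; ring
    rw [h1]
    calc |(-δ + δ^2/2) + Real.log t| ≤ δ^(2+1)/(1-δ) := htaylor
    _ ≤ (10/9) * δ^3 := by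
      rw [show (2+1 : ℕ) = 3 from rfl]
      rw [div_le_iff₀ (by linarith)]
      nlinarith [mul_nonneg (le_of_lt (pow_pos hδ0 3)) (by linarith : (0:ℝ) ≤ 1 - 10*δ)]
  -- logb bound
  have hb1 : (1:ℝ) ≤ (b:ℝ) := by
    have : (25:ℝ) ≤ (b:ℝ) := by exact_mod_cast hb25
    linarith
  have hlogb_nonneg : 0 ≤ Real.logb 2 (b:ℝ) := Real.logb_nonneg one_lt_two hb1
  have hlb : Real.logb 2 (b:ℝ) ≤ (b:ℝ)/2 := by
    have h := sq_le_two_pow hb25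
    have h2 : ((b:ℝ))^2 ≤ 2^b := by exact_mod_cast h
    have hlog := Real.log_le_log (by positivity) h2
    rw [Real.log_pow, Real.log_pow] at hlog
    push_cast at hlog
    rw [Real.logb, div_le_iff₀ hlog2pos]
    linarith only [hlog]
  -- epsilon
  set ε : ℝ := 2 * (3/4 : ℝ)^(b-2) * (2 + (b:ℝ) + Real.logb 2 b) with hεdef
  have hpow34 : ((3:ℝ)/4)^(b-2) = ((3:ℝ)/4)^b * (((3:ℝ)/4)^2)⁻¹ :=
    pow_sub₀ _ (by norm_num) (by omega)
  have hεval : ε = (32/9) * ((3:ℝ)/4)^b * (2 + (b:ℝ) + Real.logb 2 b) := by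
    rw [hεdef, hpow34, show (((3:ℝ)/4)^2)⁻¹ = 16/9 by norm_num]
    ring
  have h34pos : (0:ℝ) < ((3:ℝ)/4)^b := by positivity
  have hεpos : 0 ≤ ε := by
    rw [hεval]
    exact mul_nonneg (by positivity) (by linarith only [hlogb_nonneg, hb1])
  have hεub : ε ≤ 2/5 := by
    have h1 : 2 + (b:ℝ) + Real.logb 2 b ≤ 2 + 2*(b:ℝ) := by linarith
    calc ε = (32/9) * (((3:ℝ)/4)^b * (2 + (b:ℝ) + Real.logb 2 b)) := by rw [hεval]; ring
    _ ≤ (32/9) * (((3:ℝ)/4)^b * (2 + 2*(b:ℝ))) := by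
        apply mul_le_mul_of_nonneg_left _ (by norm_num)
        exact mul_le_mul_of_nonneg_left h1 h34pos.le
    _ ≤ (32/9) * (1/10) := mul_le_mul_of_nonneg_left (pow34_lin hb25) (by norm_num)
    _ ≤ 2/5 := by norm_num
  -- e1 : truncation error
  have he1 : |yhatp - ((thatp - 1) - (1/2) * (thatp - 1)^2)| ≤ ((2:ℝ)^b)⁻¹ := by
    rw [hyhat]; exact abs_trunc_sub_le b _
  -- e2 : Lipschitz bound
  have hthat_t : |thatp - t| ≤ ε := hthat2
  have htub : t ≤ 1 + 7/80 := by
    have : δ = t - 1 := hδ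
    linarith only [this, hδ10]
  have hthatub : thatp ≤ t + ε := by
    have h := (abs_le.mp hthat_t).2
    linarith only [h]
  have ht1' : 1 ≤ t := le_of_lt ht1
  have he2 : |((thatp - 1) - (1/2)*(thatp - 1)^2) - (δ - (1/2)*δ^2)| ≤ ε := by
    have hid : ((thatp - 1) - (1/2)*(thatp - 1)^2) - (δ - (1/2)*δ^2)
        = (thatp - t) * ((4 - thatp - t)/2) := by rw [hδ]; ring
    rw [hid, abs_mul]
    have h2 : |(4 - thatp - t)/2| ≤ 1 := by
      rw [abs_le]
      constructor <;> linarith only [hthat1, ht1', htub, hthatub, hεub]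
    calc |thatp - t| * |(4 - thatp - t)/2| ≤ |thatp - t| * 1 :=
          mul_le_mul_of_nonneg_left h2 (abs_nonneg _)
    _ = |thatp - t| := mul_one _
    _ ≤ ε := hthat_t
  -- combined pointwise error
  have hkey : |yhatp - Real.log t| ≤ ((2:ℝ)^b)⁻¹ + ε + (10/9)*δ^3 := by
    have hdec : yhatp - Real.log t =
        (yhatp - ((thatp - 1) - (1/2) * (thatp - 1)^2))
        + (((thatp - 1) - (1/2)*(thatp - 1)^2) - (δ - (1/2)*δ^2))
        + ((δ - (1/2)*δ^2) - Real.log t) := by ring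
    rw [hdec]
    calc |_ + _ + _| ≤ |_ + _| + |(δ - (1/2)*δ^2) - Real.log t| := abs_add_le _ _
    _ ≤ |yhatp - ((thatp - 1) - (1/2) * (thatp - 1)^2)|
        + |((thatp - 1) - (1/2)*(thatp - 1)^2) - (δ - (1/2)*δ^2)|
        + |(δ - (1/2)*δ^2) - Real.log t| := by
          have h := abs_add_le (yhatp - ((thatp - 1) - (1/2) * (thatp - 1)^2))
            (((thatp - 1) - (1/2)*(thatp - 1)^2) - (δ - (1/2)*δ^2))
          linarith only [h]
    _ ≤ ((2:ℝ)^b)⁻¹ + ε + (10/9)*δ^3 := by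
          linarith only [he1, he2, he3]
  -- split of the global error
  have hsplit : (2:ℝ)^ℓ * yhatp + ((p:ℝ) - 1) * r - Real.log w
      = (2:ℝ)^ℓ * (yhatp - Real.log t) + ((p:ℝ) - 1) * (r - Real.log 2) := by
    rw [hlogw]; ring
  have hp1R : (0:ℝ) ≤ (p:ℝ) - 1 := by
    have : (1:ℝ) ≤ (p:ℝ) := by exact_mod_cast hp
    linarith
  have hrb : |r - Real.log 2| ≤ ((2:ℝ)^b)⁻¹ := by
    have : ((2:ℝ)^(-(b:ℤ))) = ((2:ℝ)^b)⁻¹ := by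
      rw [zpow_neg, zpow_natCast]
    rwa [this] at hr
  have hmain : |(2:ℝ)^ℓ * yhatp + ((p:ℝ) - 1) * r - Real.log w|
      ≤ (2:ℝ)^ℓ * (((2:ℝ)^b)⁻¹ + ε + (10/9)*δ^3) + ((p:ℝ) - 1) * ((2:ℝ)^b)⁻¹ := by
    rw [hsplit]
    calc |(2:ℝ)^ℓ * (yhatp - Real.log t) + ((p:ℝ) - 1) * (r - Real.log 2)|
        ≤ |(2:ℝ)^ℓ * (yhatp - Real.log t)| + |((p:ℝ) - 1) * (r - Real.log 2)| := abs_add_le _ _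
    _ = (2:ℝ)^ℓ * |yhatp - Real.log t| + ((p:ℝ) - 1) * |r - Real.log 2| := by
        rw [abs_mul, abs_mul, abs_of_pos h2lpos, abs_of_nonneg hp1R]
    _ ≤ (2:ℝ)^ℓ * (((2:ℝ)^b)⁻¹ + ε + (10/9)*δ^3) + ((p:ℝ) - 1) * ((2:ℝ)^b)⁻¹ := by
        apply add_le_add
        · exact mul_le_mul_of_nonneg_left hkey h2lpos.le
        · exact mul_le_mul_of_nonneg_left hrb hp1R
  -- u and its powers
  obtain ⟨u, hu2, hulb, huub⟩ : ∃ u:ℝ, u^2 = 3/4 ∧ (0.866:ℝ) ≤ u ∧ u ≤ (0.86605:ℝ) := by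
    have hs2 : Real.sqrt 3^2 = 3 := Real.sq_sqrt (by norm_num)
    have hslb : (1.732:ℝ) ≤ Real.sqrt 3 := by
      rw [Real.le_sqrt (by norm_num) (by norm_num)]; norm_num
    have hsub : Real.sqrt 3 ≤ 1.7321 := by
      rw [Real.sqrt_le_left (by norm_num)]; norm_num
    refine ⟨Real.sqrt 3 / 2, ?_, by linarith only [hslb], by linarith only [hsub]⟩
    rw [div_pow, hs2]; norm_num
  have hupos : (0:ℝ) < u := by linarith only [hulb]
  have hu5eq : u^5 = 9/16*u := by linear_combination (u*(u^2+3/4))*hu2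
  have hUpos : (0:ℝ) < u^(5*ℓ) := pow_pos hupos _
  have hU : (3/4 : ℝ) ^ ((5*(ℓ:ℝ))/2) = u^(5*ℓ) := by
    have h34 : ((3:ℝ)/4) = u ^ ((2:ℕ):ℝ) := by
      rw [Real.rpow_natCast, hu2]
    rw [h34, ← Real.rpow_natCast u (5*ℓ), ← Real.rpow_mul hupos.le]
    congr 1
    push_cast
    ring
  have hu5lb : (1:ℝ)/4 ≤ u^5 := by rw [hu5eq]; linarith only [hulb]
  have hu5ub : u^5 ≤ 1 := by rw [hu5eq]; linarith only [huub]
  have hu5Lpow : (u^5)^ℓ = u^(5*ℓ) := (pow_mul u 5 ℓ).symm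
  -- A bound : 2^ℓ * (2^b)⁻¹ ≤ u^(5ℓ)
  have hpowb : ((2:ℝ)^b)⁻¹ ≤ ((2:ℝ)^(5*ℓ))⁻¹ := by
    apply inv_anti₀ (by positivity)
    exact pow_le_pow_right₀ (by norm_num) hb5
  have h2linv : (2:ℝ)^ℓ * ((2:ℝ)^(5*ℓ))⁻¹ = ((1:ℝ)/16)^ℓ := by
    rw [pow_mul, show ((2:ℝ)^5) = 32 by norm_num, ← inv_pow, ← mul_pow]
    norm_num
  have hA : (2:ℝ)^ℓ * ((2:ℝ)^b)⁻¹ ≤ u^(5*ℓ) := by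
    calc (2:ℝ)^ℓ * ((2:ℝ)^b)⁻¹ ≤ (2:ℝ)^ℓ * ((2:ℝ)^(5*ℓ))⁻¹ :=
          mul_le_mul_of_nonneg_left hpowb h2lpos.le
    _ = ((1:ℝ)/16)^ℓ := h2linv
    _ ≤ (u^5)^ℓ := pow_le_pow_left₀ (by norm_num) (by linarith only [hu5lb]) ℓ
    _ = u^(5*ℓ) := hu5Lpow
  have hDpow : ((2:ℝ)^b)⁻¹ ≤ u^(5*ℓ) := by
    calc ((2:ℝ)^b)⁻¹ ≤ (2:ℝ)^ℓ * ((2:ℝ)^b)⁻¹ := by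
          nth_rewrite 1 [← one_mul ((2:ℝ)^b)⁻¹]
          apply mul_le_mul_of_nonneg_right _ (by positivity)
          linarith only [h2l16]
    _ ≤ u^(5*ℓ) := hA
  -- C bound
  have hC : (2:ℝ)^ℓ * ((10/9)*δ^3) ≤ 4 * u^(5*ℓ) := by
    have h1 : δ^3 ≤ ((7/5) * ((1:ℝ)/2^ℓ))^3 := pow_le_pow_left₀ hδ0.le hδub 3
    have hv : ((1:ℝ)/2^ℓ) * (2:ℝ)^ℓ = 1 := by field_simp
    have hsq : ((1:ℝ)/2^ℓ)^2 = ((1:ℝ)/4)^ℓ := by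
      have h4 : ((2:ℝ)^ℓ)^2 = 4^ℓ := by
        rw [← pow_mul, mul_comm, pow_mul]; norm_num
      rw [div_pow, one_pow, h4, div_pow, one_pow]
    have key : (2:ℝ)^ℓ * ((10/9)*((7/5) * ((1:ℝ)/2^ℓ))^3) = (686/225) * ((1/4:ℝ))^ℓ := by
      calc (2:ℝ)^ℓ * ((10/9)*((7/5) * ((1:ℝ)/2^ℓ))^3)
          = (686/225) * (((1:ℝ)/2^ℓ)^2) * (((1:ℝ)/2^ℓ) * (2:ℝ)^ℓ) := by ring
      _ = (686/225) * ((1/4:ℝ))^ℓ := by rw [hv, hsq]; ring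
    have h2 : (2:ℝ)^ℓ * ((10/9)*δ^3) ≤ (686/225) * ((1/4:ℝ))^ℓ := by
      rw [← key]
      apply mul_le_mul_of_nonneg_left _ h2lpos.le
      linarith only [h1]
    have h3 : ((1/4:ℝ))^ℓ ≤ (u^5)^ℓ := pow_le_pow_left₀ (by norm_num) (by linarith only [hu5lb]) ℓ
    have h4 : (0:ℝ) ≤ ((1/4:ℝ))^ℓ := by positivity
    calc (2:ℝ)^ℓ * ((10/9)*δ^3) ≤ (686/225) * ((1/4:ℝ))^ℓ := h2
    _ ≤ 4 * ((1/4:ℝ))^ℓ := by linarith only [h4]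
    _ ≤ 4 * (u^5)^ℓ := by linarith only [h3]
    _ = 4 * u^(5*ℓ) := by rw [hu5Lpow]
  -- B bound
  have hbln : (b:ℝ) ≤ 5*(ℓ:ℝ)+5 := by exact_mod_cast hble
  have hBlin : 2 + (b:ℝ) + Real.logb 2 b ≤ 19/2 + 15/2*(ℓ:ℝ) := by
    linarith only [hlb, hbln]
  have h34b : ((3:ℝ)/4)^b ≤ ((3:ℝ)/4)^(5*ℓ) :=
    pow_le_pow_of_le_one (by norm_num) (by norm_num) hb5
  have h34u : ((3:ℝ)/4)^(5*ℓ) = u^(5*ℓ) * u^(5*ℓ) := by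
    rw [← hu2, ← pow_mul, ← pow_add]
    congr 1
    omega
  have hθpos : (0:ℝ) < 2*u^5 := by positivity
  have hθub : 2*u^5 ≤ 9743063/10000000 := by
    rw [hu5eq]; linarith only [huub]
  have hdlb : 2637/100000 ≤ 1/(2*u^5) - 1 := by
    have h1 : (2*u^5) * (102637/100000) ≤ 1 := by linarith only [hθub, hθpos]
    have h2 : (102637:ℝ)/100000 ≤ 1/(2*u^5) := by
      rw [le_div_iff₀ hθpos]; linarith only [h1]
    linarith only [h2]
  have hmulθ : (2*u^5)*(1+(1/(2*u^5) - 1)) = 1 := by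
    field_simp
    ring
  have hL4 := L4' (1/(2*u^5) - 1) (2*u^5) hdlb hθpos hmulθ ℓ
  have hB : (2:ℝ)^ℓ * ε ≤ 520 * u^(5*ℓ) := by
    have e188 : (0:ℝ) ≤ 2 + (b:ℝ) + Real.logb 2 b := by linarith only [hlogb_nonneg, hb1]
    calc (2:ℝ)^ℓ * ε = (32/9) * ((2 + (b:ℝ) + Real.logb 2 b) * (((3:ℝ)/4)^b * 2^ℓ)) := by
          rw [hεval]; ring
    _ ≤ (32/9) * ((19/2 + 15/2*(ℓ:ℝ)) * (((3:ℝ)/4)^(5*ℓ) * 2^ℓ)) := by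
        apply mul_le_mul_of_nonneg_left _ (by norm_num)
        apply mul_le_mul hBlin (mul_le_mul_of_nonneg_right h34b h2lpos.le)
          (by positivity) (by linarith only [hBlin, e188])
    _ = ((19/2 + 15/2*(ℓ:ℝ)) * (2*u^5)^ℓ) * ((32/9) * u^(5*ℓ)) := by
        rw [h34u, mul_pow, hu5Lpow]; ring
    _ ≤ (585/4) * ((32/9) * u^(5*ℓ)) := by
        apply mul_le_mul_of_nonneg_right hL4 (by positivity)
    _ = 520 * u^(5*ℓ) := by ring
  -- assemble
  have hptom : (p:ℝ) - 1 ≤ (m:ℝ) := by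
    have : (p:ℝ) ≤ (m:ℝ) := by exact_mod_cast hpm
    linarith only [this]
  have hD : ((p:ℝ)-1) * ((2:ℝ)^b)⁻¹ ≤ (m:ℝ) * u^(5*ℓ) :=
    mul_le_mul hptom hDpow (by positivity) (by positivity)
  have htotal : |(2:ℝ)^ℓ * yhatp + ((p:ℝ) - 1) * r - Real.log w|
      ≤ (525 + (m:ℝ)) * u^(5*ℓ) := by
    calc |(2:ℝ)^ℓ * yhatp + ((p:ℝ) - 1) * r - Real.log w|
        ≤ (2:ℝ)^ℓ * (((2:ℝ)^b)⁻¹ + ε + (10/9)*δ^3) + ((p:ℝ) - 1) * ((2:ℝ)^b)⁻¹ := hmain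
    _ = (2:ℝ)^ℓ * ((2:ℝ)^b)⁻¹ + (2:ℝ)^ℓ * ε + (2:ℝ)^ℓ * ((10/9)*δ^3)
        + ((p:ℝ) - 1) * ((2:ℝ)^b)⁻¹ := by ring
    _ ≤ u^(5*ℓ) + 520 * u^(5*ℓ) + 4 * u^(5*ℓ) + (m:ℝ) * u^(5*ℓ) := by
        linarith only [hA, hB, hC, hD]
    _ = (525 + (m:ℝ)) * u^(5*ℓ) := by ring
  -- bracket bound
  have hX : (161/25:ℝ) ≤ 32/9 + (n:ℝ)/Real.log 2 := by
    have hn : (2:ℝ) ≤ (n:ℝ) := by exact_mod_cast hn2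
    have h1 : (2:ℝ)/Real.log 2 ≤ (n:ℝ)/Real.log 2 := by gcongr
    have h2 : (2885/1000:ℝ) ≤ 2/Real.log 2 := by
      rw [le_div_iff₀ hlog2pos]; linarith only [hlog2_lt]
    linarith only [h1, h2]
  have hcube : 2*((161/25:ℝ))^3 ≤ 2*(32/9 + (n:ℝ)/Real.log 2)^3 := by
    have h := pow_le_pow_left₀ (by norm_num : (0:ℝ) ≤ 161/25) hX 3
    linarith only [h]
  have hbr : (525:ℝ) + (m:ℝ) ≤ (m:ℝ) + 32/9 + 2*(32/9 + (n:ℝ)/Real.log 2)^3 := by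
    have : (525:ℝ) ≤ 32/9 + 2*((161/25:ℝ))^3 := by norm_num
    linarith only [this, hcube]
  rw [hU]
  calc |(2:ℝ)^ℓ * yhatp + ((p:ℝ) - 1) * r - Real.log w|
      ≤ (525 + (m:ℝ)) * u^(5*ℓ) := htotal
  _ ≤ ((m:ℝ) + 32/9 + 2*(32/9 + (n:ℝ)/Real.log 2)^3) * u^(5*ℓ) :=
      mul_le_mul_of_nonneg_right hbr hUpos.le
  _ = u^(5*ℓ) * ((m:ℝ) + 32/9 + 2*(32/9 + (n:ℝ)/Real.log 2)^3) := mul_comm _ _
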